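/- Let n ≥ 0 be an integer and a, q nonzero complex numbers such that q^{2k} ≠ 1 for 1 ≤ k ≤ n and a^2 q^{2k} ≠ 1 for every integer k with −1 ≤ k ≤ 2n−1 (equivalently {k; a} ≠ 0 for those k). Then Σ_{i=0}^{n} (−1)^i (a^{2i} q^{2i(i−1)} / ({i}! {n−i}!)) · ({2i−1; a}/{n+i−1; a}_{n+1}) = (−1)^n a^{n} q^{n(n−1)/2} / {n}!. (This says the full-twist coefficient t_{n,p} at p = 1 equals t_n = a^n q^{n(n−1)/2}/{n}!.) -/

import Mathlib

open Finset

/-- The balanced q-bracket `{n} = q^n - q^(-n)`. -/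
noncomputable def qbr (q : ℂ) (n : ℤ) : ℂ := q ^ n - q ^ (-n)

/-- The two-variable bracket `{n; a} = a q^n - a⁻¹ q^(-n)`. -/
noncomputable def qbrA (a q : ℂ) (n : ℤ) : ℂ := a * q ^ n - a⁻¹ * q ^ (-n)

/-- Descending product `{n}_i = {n}{n-1}⋯{n-i+1}` (equal to 1 when `i = 0`). -/
noncomputable def qbrP (q : ℂ) (n : ℤ) (i : ℕ) : ℂ := ∏ k ∈ Finset.range i, qbr q (n - k)

/-- Descending product `{n; a}_i = {n; a}{n-1; a}⋯{n-i+1; a}` (equal to 1 when `i = 0`). -/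
noncomputable def qbrAP (a q : ℂ) (n : ℤ) (i : ℕ) : ℂ := ∏ k ∈ Finset.range i, qbrA a q (n - k)

/-- Ascending product `{n; a}{n+1; a}⋯{n+i-1; a}` (used for `{-n; a}_i`, equal to 1 when `i = 0`). -/
noncomputable def qbrAPasc (a q : ℂ) (n : ℤ) (i : ℕ) : ℂ := ∏ k ∈ Finset.range i, qbrA a q (n + k)

/-- The factorial `{n}! = {n}_n`. -/
noncomputable def qfac (q : ℂ) (n : ℕ) : ℂ := qbrP q n n

/-- The balanced q-binomial coefficient `[n choose i] = {n}!/({i}!{n-i}!)`. -/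
noncomputable def qbinom (q : ℂ) (n i : ℕ) : ℂ := qfac q n / (qfac q i * qfac q (n - i))

/-! ### Auxiliary definitions for the proof -/

/-- The normalized summand `{n}! ·(summand)`. -/
noncomputable def Tsum (a q : ℂ) (n i : ℕ) : ℂ :=
  (-1)^i * a^(2*i) * q^(2*(i:ℤ)*((i:ℤ)-1)) * qbrP q (n:ℤ) i / qfac q i *
    (qbrA a q (2*(i:ℤ)-1) / qbrAP a q ((n:ℤ)+(i:ℤ)-1) (n+1))

/-- The telescoping certificate. -/
noncomputable def Gsh (a q : ℂ) (n i : ℕ) : ℂ :=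
  (-1)^(i+1) * a^(2*i) * q^(2*((i:ℤ)-1)^2+2*(n:ℤ)) * (qbr q (i:ℤ) * qbrP q ((n:ℤ)+1) i) /
    (qbr q ((n:ℤ)+1) * qfac q i * qbrAP a q ((n:ℤ)+(i:ℤ)-1) (n+1))

/-! ### Basic lemmas -/

lemma qbr_zero (q : ℂ) : qbr q 0 = 0 := by simp [qbr]

lemma qbr_inv (q : ℂ) (k : ℤ) : qbr q k = q^k - (q^k)⁻¹ := by rw [qbr, zpow_neg]

lemma qbrA_inv (a q : ℂ) (k : ℤ) : qbrA a q k = a*q^k - (a*q^k)⁻¹ := by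
  rw [qbrA, zpow_neg, mul_inv]

lemma sub_inv_frac (z : ℂ) (hz : z ≠ 0) : z - z⁻¹ = (z*z-1)/z := by
  rw [eq_div_iff hz, sub_mul, inv_mul_cancel₀ hz]

lemma sub_inv_frac_div (u v : ℂ) (hu : u ≠ 0) (hv : v ≠ 0) :
    (u/v) - (u/v)⁻¹ = (u*u-v*v)/(u*v) := by
  rw [inv_div, div_sub_div _ _ hv hu, mul_comm v u]

lemma qbrP_succ (q : ℂ) (m : ℤ) (i : ℕ) : qbrP q m (i+1) = qbrP q m i * qbr q (m-i) :=
  Finset.prod_range_succ _ _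

lemma qbrP_succ' (q : ℂ) (m : ℤ) (i : ℕ) : qbrP q m (i+1) = qbr q m * qbrP q (m-1) i := by
  rw [qbrP, Finset.prod_range_succ', mul_comm]
  congr 1
  · simp
  · apply Finset.prod_congr rfl
    intro x _
    congr 1
    push_cast
    ring

lemma qbrAP_succ (a q : ℂ) (m : ℤ) (i : ℕ) :
    qbrAP a q m (i+1) = qbrAP a q m i * qbrA a q (m-i) := Finset.prod_range_succ _ _

lemma qbrAP_succ' (a q : ℂ) (m : ℤ) (i : ℕ) :
    qbrAP a q m (i+1) = qbrA a q m * qbrAP a q (m-1) i := by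
  rw [qbrAP, Finset.prod_range_succ', mul_comm]
  congr 1
  · simp
  · apply Finset.prod_congr rfl
    intro x _
    congr 1
    push_cast
    ring

lemma qfac_succ (q : ℂ) (i : ℕ) : qfac q (i+1) = qbr q ((i:ℤ)+1) * qfac q i := by
  have h := qbrP_succ' q ((i:ℤ)+1) i
  rw [show (i:ℤ)+1-1 = (i:ℤ) by ring] at h
  have e : ((i+1:ℕ):ℤ) = (i:ℤ)+1 := by push_cast; ring
  rw [qfac, qfac, e, h]

lemma qbr_ne_of (q : ℂ) (hq : q ≠ 0) (k : ℕ) (h : q^(2*k) ≠ 1) : qbr q (k:ℤ) ≠ 0 := by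
  intro h0
  apply h
  have hk : q^((k:ℤ)) = q^(-(k:ℤ)) := by rwa [qbr, sub_eq_zero] at h0
  calc q^(2*k) = q^(((2*k:ℕ)):ℤ) := (zpow_natCast q (2*k)).symm
    _ = q^((k:ℤ)+(k:ℤ)) := by norm_num; ring_nf
    _ = q^(k:ℤ) * q^(k:ℤ) := zpow_add₀ hq _ _
    _ = q^(k:ℤ) * q^(-(k:ℤ)) := by rw [← hk]
    _ = q^((k:ℤ)+(-(k:ℤ))) := (zpow_add₀ hq _ _).symm
    _ = 1 := by simp

lemma qbrA_ne_of (a q : ℂ) (ha : a ≠ 0) (hq : q ≠ 0) (k : ℤ) (h : a^2*q^(2*k) ≠ 1) :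
    qbrA a q k ≠ 0 := by
  intro h0
  apply h
  have hk : a * q^k = a⁻¹ * q^(-k) := by rwa [qbrA, sub_eq_zero] at h0
  have hqk : q^k ≠ 0 := zpow_ne_zero _ hq
  calc a^2*q^(2*k) = (a*q^k)*(a*q^k) := by
        rw [show 2*k = k+k by ring, zpow_add₀ hq]; ring
    _ = (a*q^k)*(a⁻¹*q^(-k)) := by rw [← hk]
    _ = 1 := by rw [zpow_neg]; field_simp

lemma qbrP_ne (q : ℂ) (m : ℤ) (i : ℕ) (h : ∀ j : ℕ, j < i → qbr q (m - j) ≠ 0) :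
    qbrP q m i ≠ 0 :=
  Finset.prod_ne_zero_iff.mpr fun j hj => h j (Finset.mem_range.mp hj)

lemma qbrAP_ne (a q : ℂ) (m : ℤ) (i : ℕ) (h : ∀ j : ℕ, j < i → qbrA a q (m - j) ≠ 0) :
    qbrAP a q m i ≠ 0 :=
  Finset.prod_ne_zero_iff.mpr fun j hj => h j (Finset.mem_range.mp hj)

lemma qbr_ne_all (q : ℂ) (hq : q ≠ 0) (N : ℕ) (hroot : ∀ k : ℕ, 1 ≤ k → k ≤ N → q ^ (2*k) ≠ 1) :
    ∀ m : ℤ, 1 ≤ m → m ≤ (N:ℤ) → qbr q m ≠ 0 := by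
  intro m h1 h2
  lift m to ℕ using (by omega)
  exact qbr_ne_of q hq m (hroot m (by exact_mod_cast h1) (by exact_mod_cast h2))

lemma qfac_ne (q : ℂ) (N : ℕ) (hbr : ∀ m : ℤ, 1 ≤ m → m ≤ (N:ℤ) → qbr q m ≠ 0)
    (i : ℕ) (hi : i ≤ N) : qfac q i ≠ 0 := by
  apply qbrP_ne
  intro j hj
  apply hbr
  · omega
  · omega

/-! ### The key contiguous-bracket identity -/

lemma keyL (a q : ℂ) (ha : a ≠ 0) (hq : q ≠ 0) (N I : ℤ) :
    qbr q (N+1) * qbrA a q (2*I-1)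
      + a * q^N * (qbr q (N+1-I) * qbrA a q (2*I-1) * qbrA a q (N+I))
    = a * a * q^(2*N+2*I) * (qbr q (N+1-I) * qbrA a q (I-1))
      + q^(2*N-2*I+2) * (qbr q I * qbrA a q (N+I)) := by
  have hX : q^I ≠ 0 := zpow_ne_zero _ hq
  have hY : q^N ≠ 0 := zpow_ne_zero _ hq
  have pN1 : q^(N+1) = q*q^N := by rw [zpow_add_one₀ hq]; ring
  have p2I1 : q^(2*I-1) = (q^I*q^I)/q := by
    rw [show (2:ℤ)*I-1 = I+I-1 by ring, zpow_sub₀ hq, zpow_add₀ hq, zpow_one]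
  have pN1I : q^(N+1-I) = (q*q^N)/q^I := by
    rw [show N+1-I = (N+1)-I by ring, zpow_sub₀ hq, pN1]
  have pNI : q^(N+I) = q^I*q^N := by rw [zpow_add₀ hq]; ring
  have pI1 : q^(I-1) = q^I/q := by rw [zpow_sub₀ hq, zpow_one]
  have pbig : q^(2*N+2*I) = (q^I*q^N)*(q^I*q^N) := by
    rw [show 2*N+2*I = (N+I)+(N+I) by ring, zpow_add₀ hq, pNI]
  have pbig2 : q^(2*N-2*I+2) = ((q*q^N)*(q*q^N))/(q^I*q^I) := by
    rw [show 2*N-2*I+2 = ((N+1)-I)+((N+1)-I) by ring, zpow_add₀ hq, zpow_sub₀ hq, pN1,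
        div_mul_div_comm]
  have c1 : qbr q (N+1) = ((q*q^N)*(q*q^N)-1)/(q*q^N) := by
    rw [qbr_inv, pN1, sub_inv_frac _ (by simp [hq, hY])]
  have c2 : qbrA a q (2*I-1) = ((a*(q^I*q^I))*(a*(q^I*q^I)) - q*q)/((a*(q^I*q^I))*q) := by
    rw [qbrA_inv, p2I1, show a*((q^I*q^I)/q) = (a*(q^I*q^I))/q by ring,
        sub_inv_frac_div _ _ (by simp [ha, hX]) hq]
  have c3 : qbr q (N+1-I) = ((q*q^N)*(q*q^N) - q^I*q^I)/((q*q^N)*q^I) := by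
    rw [qbr_inv, pN1I, sub_inv_frac_div _ _ (by simp [hq, hY]) hX]
  have c4 : qbrA a q (N+I) = ((a*(q^I*q^N))*(a*(q^I*q^N))-1)/(a*(q^I*q^N)) := by
    rw [qbrA_inv, pNI, show a*(q^I*q^N) = a*(q^I*q^N) by rfl,
        sub_inv_frac _ (by simp [ha, hX, hY])]
  have c5 : qbrA a q (I-1) = ((a*q^I)*(a*q^I) - q*q)/((a*q^I)*q) := by
    rw [qbrA_inv, pI1, show a*(q^I/q) = (a*q^I)/q by ring,
        sub_inv_frac_div _ _ (by simp [ha, hX]) hq]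
  have c6 : qbr q I = (q^I*q^I-1)/q^I := by
    rw [qbr_inv, sub_inv_frac _ hX]
  rw [c1, c2, c3, c4, c5, c6, pbig, pbig2]
  simp only [div_mul_div_comm, div_mul_eq_mul_div, mul_div_assoc', div_div]
  rw [div_add_div _ _ (by simp [ha, hq, hX, hY]) (by simp [ha, hq, hX, hY]),
      div_add_div _ _ (by simp [ha, hq, hX, hY]) (by simp [ha, hq, hX, hY]),
      div_eq_div_iff (by simp [ha, hq, hX, hY]) (by simp [ha, hq, hX, hY])]
  ring

/-! ### The pointwise telescoping identity -/

lemma point (a q : ℂ) (ha : a ≠ 0) (hq : q ≠ 0) (n i : ℕ) (hi : i ≤ n+1)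
    (hbr : ∀ m : ℤ, 1 ≤ m → m ≤ (n:ℤ)+1 → qbr q m ≠ 0)
    (hbA : ∀ k : ℤ, -1 ≤ k → k ≤ 2*(n:ℤ)+1 → qbrA a q k ≠ 0) :
    Tsum a q (n+1) i + (a*q^(n:ℤ)) * Tsum a q n i = Gsh a q n (i+1) - Gsh a q n i := by
  -- nonzero facts
  have hfi : qfac q i ≠ 0 := by
    apply qbrP_ne; intro j hj; apply hbr <;> omega
  have hB1 : qbr q ((n:ℤ)+1) ≠ 0 := hbr _ (by omega) (by omega)
  have hD : qbrAP a q ((n:ℤ)+(i:ℤ)) (n+2) ≠ 0 := by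
    apply qbrAP_ne; intro j hj; apply hbA <;> omega
  have hAPm : qbrAP a q ((n:ℤ)+(i:ℤ)-1) (n+1) ≠ 0 := by
    apply qbrAP_ne; intro j hj; apply hbA <;> omega
  have hAPt : qbrAP a q ((n:ℤ)+(i:ℤ)) (n+1) ≠ 0 := by
    apply qbrAP_ne; intro j hj; apply hbA <;> omega
  have hB4 : qbrA a q ((n:ℤ)+(i:ℤ)) ≠ 0 := hbA _ (by omega) (by omega)
  have hB5 : qbrA a q ((i:ℤ)-1) ≠ 0 := hbA _ (by omega) (by omega)
  -- structural relations
  have hDsplit : qbrAP a q ((n:ℤ)+(i:ℤ)) (n+2)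
      = qbrA a q ((n:ℤ)+(i:ℤ)) * qbrAP a q ((n:ℤ)+(i:ℤ)-1) (n+1) :=
    qbrAP_succ' a q ((n:ℤ)+(i:ℤ)) (n+1)
  have hDsplit2 : qbrAP a q ((n:ℤ)+(i:ℤ)) (n+2)
      = qbrAP a q ((n:ℤ)+(i:ℤ)) (n+1) * qbrA a q ((i:ℤ)-1) := by
    have h := qbrAP_succ a q ((n:ℤ)+(i:ℤ)) (n+1)
    rw [show (n:ℤ)+(i:ℤ)-((n+1:ℕ):ℤ) = (i:ℤ)-1 by push_cast; ring] at h
    exact h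
  have hPrel : qbrP q ((n:ℤ)+1) i * qbr q ((n:ℤ)+1-(i:ℤ)) = qbr q ((n:ℤ)+1) * qbrP q (n:ℤ) i := by
    rw [← qbrP_succ, qbrP_succ', show (n:ℤ)+1-1 = (n:ℤ) by ring]
  have hPn : qbrP q (n:ℤ) i = qbrP q ((n:ℤ)+1) i * qbr q ((n:ℤ)+1-(i:ℤ)) / qbr q ((n:ℤ)+1) := by
    rw [eq_div_iff hB1]
    linear_combination -hPrel
  -- the four normal forms
  have e1 : Tsum a q (n+1) i =
      ((-1)^i * a^(2*i) * q^(2*(i:ℤ)*((i:ℤ)-1))) * (qbr q ((n:ℤ)+1) * qbrA a q (2*(i:ℤ)-1)) *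
        (qbrP q ((n:ℤ)+1) i / (qbr q ((n:ℤ)+1) * qfac q i * qbrAP a q ((n:ℤ)+(i:ℤ)) (n+2))) := by
    rw [Tsum, show (((n+1:ℕ)):ℤ) = (n:ℤ)+1 by push_cast; ring,
        show (n:ℤ)+1+(i:ℤ)-1 = (n:ℤ)+(i:ℤ) by ring]
    simp only [div_mul_div_comm, div_mul_eq_mul_div, mul_div_assoc', div_div]
    rw [div_eq_div_iff (by simp [hfi, hD]) (by simp [hB1, hfi, hD])]
    ring
  have e2 : (a*q^(n:ℤ)) * Tsum a q n i =
      ((-1)^i * a^(2*i) * q^(2*(i:ℤ)*((i:ℤ)-1))) *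
        (a * q^(n:ℤ) * (qbr q ((n:ℤ)+1-(i:ℤ)) * qbrA a q (2*(i:ℤ)-1) * qbrA a q ((n:ℤ)+(i:ℤ)))) *
        (qbrP q ((n:ℤ)+1) i / (qbr q ((n:ℤ)+1) * qfac q i * qbrAP a q ((n:ℤ)+(i:ℤ)) (n+2))) := by
    rw [Tsum, hDsplit]
    simp only [div_mul_div_comm, div_mul_eq_mul_div, mul_div_assoc', div_div]
    rw [div_eq_div_iff (by simp [hfi, hAPm]) (by simp [hB1, hfi, hB4, hAPm])]
    linear_combination (-(a*q^(n:ℤ) * ((-1:ℂ)^i * a^(2*i) * q^(2*(i:ℤ)*((i:ℤ)-1))) *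
      qbrA a q (2*(i:ℤ)-1) * qfac q i * qbrA a q ((n:ℤ)+(i:ℤ)) *
      qbrAP a q ((n:ℤ)+(i:ℤ)-1) (n+1))) * hPrel
  have e4 : Gsh a q n i =
      ((-1)^i * a^(2*i) * q^(2*(i:ℤ)*((i:ℤ)-1))) *
        (-(q^(2*(n:ℤ)-2*(i:ℤ)+2) * (qbr q (i:ℤ) * qbrA a q ((n:ℤ)+(i:ℤ))))) *
        (qbrP q ((n:ℤ)+1) i / (qbr q ((n:ℤ)+1) * qfac q i * qbrAP a q ((n:ℤ)+(i:ℤ)) (n+2))) := by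
    rw [Gsh, hDsplit,
        show 2*((i:ℤ)-1)^2+2*(n:ℤ) = (2*(i:ℤ)*((i:ℤ)-1)) + (2*(n:ℤ)-2*(i:ℤ)+2) by ring,
        zpow_add₀ hq, pow_succ]
    simp only [div_mul_div_comm, div_mul_eq_mul_div, mul_div_assoc', div_div]
    rw [div_eq_div_iff (by simp [hB1, hfi, hB4, hAPm]) (by simp [hB1, hfi, hB4, hAPm])]
    ring
  have e3 : Gsh a q n (i+1) =
      ((-1)^i * a^(2*i) * q^(2*(i:ℤ)*((i:ℤ)-1))) *
        (a * a * q^(2*(n:ℤ)+2*(i:ℤ)) * (qbr q ((n:ℤ)+1-(i:ℤ)) * qbrA a q ((i:ℤ)-1))) *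
        (qbrP q ((n:ℤ)+1) i / (qbr q ((n:ℤ)+1) * qfac q i * qbrAP a q ((n:ℤ)+(i:ℤ)) (n+2))) := by
    by_cases hin : i = n+1
    · subst hin
      have hz1 : qbrP q ((n:ℤ)+1) (n+2) = 0 := by
        apply Finset.prod_eq_zero (Finset.mem_range.mpr (show n+1 < n+2 by omega))
        rw [show (n:ℤ)+1-((n+1:ℕ):ℤ) = 0 by push_cast; ring]
        exact qbr_zero q
      have hz2 : qbr q ((n:ℤ)+1-((n+1:ℕ):ℤ)) = 0 := by
        rw [show (n:ℤ)+1-((n+1:ℕ):ℤ) = 0 by push_cast; ring]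
        exact qbr_zero q
      rw [Gsh, hz1, hz2]
      simp
    · have hi' : i ≤ n := by omega
      have hBip1 : qbr q ((i:ℤ)+1) ≠ 0 := hbr _ (by omega) (by omega)
      rw [Gsh, show (((i+1:ℕ)):ℤ) = (i:ℤ)+1 by push_cast; ring,
          show (n:ℤ)+((i:ℤ)+1)-1 = (n:ℤ)+(i:ℤ) by ring,
          show 2*((i:ℤ)+1-1)^2+2*(n:ℤ) = (2*(i:ℤ)*((i:ℤ)-1)) + (2*(n:ℤ)+2*(i:ℤ)) by ring,
          zpow_add₀ hq, qbrP_succ, qfac_succ, hDsplit2,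
          show ((i:ℕ)+1+1) = i+2 by omega,
          show ((-1:ℂ))^(i+2) = (-1)^i by rw [pow_add]; norm_num,
          show (2*(i+1)) = 2*i+2 by omega, pow_add]
      simp only [div_mul_div_comm, div_mul_eq_mul_div, mul_div_assoc', div_div]
      rw [div_eq_div_iff (by simp [hB1, hBip1, hfi, hAPt]) (by simp [hB1, hfi, hAPt, hB5])]
      ring
  rw [e1, e2, e3, e4]
  have key := keyL a q ha hq (n:ℤ) (i:ℤ)
  linear_combination (((-1:ℂ))^i * a^(2*i) * q^(2*(i:ℤ)*((i:ℤ)-1)) *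
    (qbrP q ((n:ℤ)+1) i / (qbr q ((n:ℤ)+1) * qfac q i * qbrAP a q ((n:ℤ)+(i:ℤ)) (n+2)))) * key

/-! ### The induction step for the sum -/

lemma step (a q : ℂ) (ha : a ≠ 0) (hq : q ≠ 0) (n : ℕ)
    (hroot : ∀ k : ℕ, 1 ≤ k → k ≤ n+1 → q ^ (2*k) ≠ 1)
    (hA : ∀ k : ℤ, -1 ≤ k → k ≤ 2*(n:ℤ)+1 → a^2*q^(2*k) ≠ 1) :
    ∑ i ∈ range (n+2), Tsum a q (n+1) i
      = -(a * q^(n:ℤ)) * ∑ i ∈ range (n+1), Tsum a q n i := by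
  have hbr : ∀ m : ℤ, 1 ≤ m → m ≤ (n:ℤ)+1 → qbr q m ≠ 0 := by
    intro m h1 h2
    exact qbr_ne_all q hq (n+1) hroot m h1 (by push_cast; omega)
  have hbA : ∀ k : ℤ, -1 ≤ k → k ≤ 2*(n:ℤ)+1 → qbrA a q k ≠ 0 := fun k h1 h2 =>
    qbrA_ne_of a q ha hq k (hA k h1 h2)
  have tele : ∑ i ∈ range (n+2), (Gsh a q n (i+1) - Gsh a q n i) = 0 := by
    rw [Finset.sum_range_sub (Gsh a q n)]
    have g0 : Gsh a q n 0 = 0 := by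
      simp [Gsh, qbr_zero]
    have gtop : Gsh a q n (n+2) = 0 := by
      have hz : qbrP q ((n:ℤ)+1) (n+2) = 0 := by
        apply Finset.prod_eq_zero (Finset.mem_range.mpr (show n+1 < n+2 by omega))
        rw [show (n:ℤ)+1-((n+1:ℕ):ℤ) = 0 by push_cast; ring]
        exact qbr_zero q
      simp [Gsh, hz]
    rw [g0, gtop]
    ring
  have hTlast : Tsum a q n (n+1) = 0 := by
    have hz : qbrP q (n:ℤ) (n+1) = 0 := by
      apply Finset.prod_eq_zero (Finset.mem_range.mpr (show n < n+1 by omega))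
      rw [show (n:ℤ)-((n:ℕ):ℤ) = 0 by ring]
      exact qbr_zero q
    simp [Tsum, hz]
  calc ∑ i ∈ range (n+2), Tsum a q (n+1) i
      = ∑ i ∈ range (n+2), ((Gsh a q n (i+1) - Gsh a q n i) - (a*q^(n:ℤ)) * Tsum a q n i) := by
        apply Finset.sum_congr rfl
        intro i hi
        have := point a q ha hq n i (by have := Finset.mem_range.mp hi; omega) hbr hbA
        linear_combination this
    _ = 0 - (a*q^(n:ℤ)) * ∑ i ∈ range (n+2), Tsum a q n i := by
        rw [Finset.sum_sub_distrib, tele, ← Finset.mul_sum]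
    _ = -(a*q^(n:ℤ)) * ∑ i ∈ range (n+1), Tsum a q n i := by
        rw [Finset.sum_range_succ, hTlast]
        ring

/-! ### The closed form for the normalized sum -/

lemma main (a q : ℂ) (ha : a ≠ 0) (hq : q ≠ 0) :
    ∀ n : ℕ, (∀ k : ℕ, 1 ≤ k → k ≤ n → q ^ (2*k) ≠ 1) →
      (∀ k : ℤ, -1 ≤ k → k ≤ 2*(n:ℤ)-1 → a^2*q^(2*k) ≠ 1) →
      ∑ i ∈ range (n+1), Tsum a q n i = (-1)^n * a^n * q^(n*(n-1)/2) := by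
  intro n
  induction n with
  | zero =>
    intro _ h2
    have hA1 : qbrA a q (-1) ≠ 0 :=
      qbrA_ne_of a q ha hq (-1) (h2 (-1) (by omega) (by omega))
    rw [Finset.sum_range_one]
    rw [show Tsum a q 0 0 = qbrA a q (2*(0:ℤ)-1) / qbrAP a q ((0:ℤ)+(0:ℤ)-1) 1 by
      simp [Tsum, qbrP, qfac]]
    rw [show (2*(0:ℤ)-1) = -1 by ring]
    rw [show qbrAP a q ((0:ℤ)+(0:ℤ)-1) 1 = qbrA a q (-1) by
      simp [qbrAP]]
    rw [div_self hA1]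
    norm_num
  | succ n ih =>
    intro h1 h2
    have ihv := ih (fun k hk1 hk2 => h1 k hk1 (by omega))
      (fun k hk1 hk2 => h2 k hk1 (by omega))
    have hstep := step a q ha hq n (fun k hk1 hk2 => h1 k hk1 hk2)
      (fun k hk1 hk2 => h2 k hk1 (by push_cast; omega))
    rw [hstep, ihv]
    have harith : (n+1)*((n+1)-1)/2 = n + n*(n-1)/2 := by
      have h : (n+1)*((n+1)-1) = n*(n-1) + 2*n := by
        cases n with
        | zero => rfl
        | succ m => simp only [Nat.add_sub_cancel]; ring
      rw [h, Nat.add_mul_div_left _ _ (by norm_num : 0 < 2), Nat.add_comm]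
    rw [harith]
    rw [pow_add]
    rw [show q^(n:ℤ) = q^(n:ℕ) from zpow_natCast q n]
    rw [pow_succ, pow_succ]
    ring

/-! ### Final assembly -/

lemma qfac_split (q : ℂ) (n i : ℕ) (hi : i ≤ n) :
    qfac q n = qbrP q (n:ℤ) i * qfac q (n-i) := by
  have hn : i + (n-i) = n := by omega
  calc qfac q n = ∏ k ∈ Finset.range n, qbr q ((n:ℤ) - (k:ℕ)) := rfl
    _ = ∏ k ∈ Finset.range (i + (n-i)), qbr q ((n:ℤ) - (k:ℕ)) := by rw [hn]
    _ = (∏ k ∈ Finset.range i, qbr q ((n:ℤ) - (k:ℕ))) *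
          ∏ k ∈ Finset.range (n-i), qbr q ((n:ℤ) - ((i+k:ℕ):ℤ)) := Finset.prod_range_add _ _ _
    _ = qbrP q (n:ℤ) i * qfac q (n-i) := by
      congr 1
      apply Finset.prod_congr rfl
      intro x _
      congr 1
      push_cast [Nat.cast_sub hi]
      ring

lemma powcast (q : ℂ) (i : ℕ) : q^(2*i*(i-1)) = q^(2*(i:ℤ)*((i:ℤ)-1)) := by
  cases i with
  | zero => norm_num
  | succ j =>
    rw [← zpow_natCast q (2*(j+1)*((j+1)-1))]
    congr 1
    push_cast [Nat.add_sub_cancel]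
    ring

theorem statement_13 (a q : ℂ) (ha : a ≠ 0) (hq : q ≠ 0) (n : ℕ)
    (hroot : ∀ k : ℕ, 1 ≤ k → k ≤ n → q ^ (2 * k) ≠ 1)
    (hA : ∀ k : ℤ, -1 ≤ k → k ≤ 2 * (n : ℤ) - 1 → a ^ 2 * q ^ (2 * k) ≠ 1) :
    ∑ i ∈ Finset.range (n + 1),
        (-1 : ℂ) ^ i * (a ^ (2 * i) * q ^ (2 * i * (i - 1)) / (qfac q i * qfac q (n - i))) *
          (qbrA a q (2 * (i : ℤ) - 1) / qbrAP a q ((n : ℤ) + (i : ℤ) - 1) (n + 1)) =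
      (-1 : ℂ) ^ n * a ^ n * q ^ (n * (n - 1) / 2) / qfac q n := by
  have hbr : ∀ m : ℤ, 1 ≤ m → m ≤ (n:ℤ) → qbr q m ≠ 0 := qbr_ne_all q hq n hroot
  have hbA : ∀ k : ℤ, -1 ≤ k → k ≤ 2*(n:ℤ)-1 → qbrA a q k ≠ 0 := fun k h1 h2 =>
    qbrA_ne_of a q ha hq k (hA k h1 h2)
  have hfn : qfac q n ≠ 0 := qfac_ne q n hbr n le_rfl
  have hmain := main a q ha hq n hroot hA
  have hterm : ∀ i ∈ Finset.range (n+1),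
      (-1 : ℂ) ^ i * (a ^ (2 * i) * q ^ (2 * i * (i - 1)) / (qfac q i * qfac q (n - i))) *
          (qbrA a q (2 * (i : ℤ) - 1) / qbrAP a q ((n : ℤ) + (i : ℤ) - 1) (n + 1))
        = Tsum a q n i / qfac q n := by
    intro i hi
    have hi' : i ≤ n := by have := Finset.mem_range.mp hi; omega
    have hfi : qfac q i ≠ 0 := qfac_ne q n hbr i hi'
    have hfni : qfac q (n-i) ≠ 0 := qfac_ne q n hbr (n-i) (by omega)
    have hP : qbrP q (n:ℤ) i ≠ 0 := by
      apply qbrP_ne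
      intro j hj
      apply hbr <;> omega
    have hC : qbrAP a q ((n:ℤ)+(i:ℤ)-1) (n+1) ≠ 0 := by
      apply qbrAP_ne
      intro j hj
      apply hbA <;> omega
    have hsplit := qfac_split q n i hi'
    rw [Tsum, powcast]
    simp only [div_mul_div_comm, div_mul_eq_mul_div, mul_div_assoc', div_div]
    rw [div_eq_div_iff (by simp [hfi, hfni, hC]) (by simp [hfi, hC, hfn])]
    linear_combination ((-1:ℂ))^i * a^(2*i) * q^(2*(i:ℤ)*((i:ℤ)-1)) *
      qbrA a q (2*(i:ℤ)-1) * qfac q i * qbrAP a q ((n:ℤ)+(i:ℤ)-1) (n+1) * hsplit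
  rw [Finset.sum_congr rfl hterm, ← Finset.sum_div, hmain]
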